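/- Let a, b ∈ ℂ with 0 < |b| < |a|, let c ∈ ℂ satisfy c² = 4ab, and let z ∈ ℂ. Let ζ_+, ζ_- be the two roots (with multiplicity) of a ζ² − z ζ + b = 0. Then: (i) if |z − c| + |z + c| < 2(|a| + |b|) (z strictly inside the ellipse E₁), then |ζ_+| < 1 and |ζ_-| < 1; (ii) if |z − c| + |z + c| = 2(|a| + |b|) (z on E₁), then one root has modulus exactly 1 and the other has modulus < 1; (iii) if |z − c| + |z + c| > 2(|a| + |b|) (z in the exterior region), then one root has modulus > 1 and the other has modulus < 1. -/

import Mathlib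

noncomputable section

lemma key_focal (a b c z ζ : ℂ) (ha : a ≠ 0) (hc : c ^ 2 = 4 * a * b)
    (hroot : a * ζ ^ 2 - z * ζ + b = 0) :
    (‖z - c‖ + ‖z + c‖) * ‖ζ‖
      = 2 * ‖a‖ * (‖ζ‖) ^ 2 + 2 * ‖b‖ := by
  have h1 : 4 * a * ((z - c) * ζ) = (2 * a * ζ - c) ^ 2 := by
    linear_combination (-4*a) * hroot - hc
  have h2 : 4 * a * ((z + c) * ζ) = (2 * a * ζ + c) ^ 2 := by
    linear_combination (-4*a) * hroot - hc
  have e1 : 4 * ‖a‖ * (‖z - c‖ * ‖ζ‖)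
      = (‖2 * a * ζ - c‖) ^ 2 := by
    have := congrArg (‖·‖) h1
    simpa [map_mul, map_pow, mul_assoc] using this
  have e2 : 4 * ‖a‖ * (‖z + c‖ * ‖ζ‖)
      = (‖2 * a * ζ + c‖) ^ 2 := by
    have := congrArg (‖·‖) h2
    simpa [map_mul, map_pow, mul_assoc] using this
  have epar : (‖2 * a * ζ - c‖) ^ 2 + (‖2 * a * ζ + c‖) ^ 2
      = 2 * ((‖2 * a * ζ‖) ^ 2 + (‖c‖) ^ 2) := by
    rw [Complex.sq_norm, Complex.sq_norm, Complex.sq_norm, Complex.sq_norm]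
    simp only [Complex.normSq_apply, Complex.sub_re, Complex.sub_im,
      Complex.add_re, Complex.add_im]
    ring
  have eabsζ : ‖2 * a * ζ‖ = 2 * ‖a‖ * ‖ζ‖ := by
    simp [map_mul]
  have eabsc : (‖c‖) ^ 2 = 4 * ‖a‖ * ‖b‖ := by
    have := congrArg (‖·‖) hc
    simpa [map_mul, map_pow] using this
  have hA : (0:ℝ) < ‖a‖ := by
    simpa using norm_pos_iff.mpr ha
  have main : 4 * ‖a‖ * ((‖z - c‖ + ‖z + c‖) * ‖ζ‖)
      = 4 * ‖a‖ * (2 * ‖a‖ * (‖ζ‖) ^ 2 + 2 * ‖b‖) := by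
    rw [eabsζ] at epar
    nlinarith [e1, e2, epar, eabsc]
  exact mul_left_cancel₀ (by positivity) main

/-- Location of the two roots `ζ₊, ζ₋` of `a ζ² − z ζ + b = 0` (encoded by the
factorization `a ζ² − z ζ + b = a (ζ − ζ₊)(ζ − ζ₋)`) relative to the unit
circle, according to the position of `z` relative to the ellipse
`E₁ = {w : |w − c| + |w + c| = 2(|a| + |b|)}`, `c² = 4ab`, when `0 < |b| < |a|`. -/
theorem roots_location_inside_on_outside (a b : ℂ)
    (hb : 0 < ‖b‖) (hba : ‖b‖ < ‖a‖)
    (c : ℂ) (hc : c ^ 2 = 4 * a * b) (z ζp ζm : ℂ)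
    (hfact : ∀ ζ : ℂ, a * ζ ^ 2 - z * ζ + b = a * (ζ - ζp) * (ζ - ζm)) :
    (‖z - c‖ + ‖z + c‖ < 2 * (‖a‖ + ‖b‖) →
        ‖ζp‖ < 1 ∧ ‖ζm‖ < 1) ∧
    (‖z - c‖ + ‖z + c‖ = 2 * (‖a‖ + ‖b‖) →
        (‖ζp‖ = 1 ∧ ‖ζm‖ < 1) ∨
        (‖ζm‖ = 1 ∧ ‖ζp‖ < 1)) ∧
    (2 * (‖a‖ + ‖b‖) < ‖z - c‖ + ‖z + c‖ →
        (1 < ‖ζp‖ ∧ ‖ζm‖ < 1) ∨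
        (1 < ‖ζm‖ ∧ ‖ζp‖ < 1)) := by
  have ha : a ≠ 0 := by
    intro h
    rw [h] at hba
    simp at hba
    linarith
  have hprod : a * (ζp * ζm) = b := by
    have h0 := hfact 0
    linear_combination -h0
  have hb0 : b ≠ 0 := by
    intro h; rw [h] at hb; simp at hb
  have hζp : ζp ≠ 0 := by
    intro h; rw [h] at hprod; simp at hprod; tauto
  have hζm : ζm ≠ 0 := by
    intro h; rw [h] at hprod; simp at hprod; tauto
  have hrootp : a * ζp ^ 2 - z * ζp + b = 0 := by rw [hfact ζp]; ring
  have hrootm : a * ζm ^ 2 - z * ζm + b = 0 := by rw [hfact ζm]; ring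
  set A := ‖a‖ with hA
  set B := ‖b‖ with hB
  set rp := ‖ζp‖ with hrp
  set rm := ‖ζm‖ with hrm
  set S := ‖z - c‖ + ‖z + c‖ with hS
  have hA0 : (0:ℝ) < A := lt_trans hb hba
  have hABprod : A * (rp * rm) = B := by
    have := congrArg (‖·‖) hprod
    simpa [map_mul] using this
  have hrp0 : (0:ℝ) < rp := norm_pos_iff.mpr hζp
  have hrm0 : (0:ℝ) < rm := norm_pos_iff.mpr hζm
  have hrprm : rp * rm < 1 := by
    nlinarith [hABprod]
  have Sp := key_focal a b c z ζp ha hc hrootp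
  have hkey : S - 2 * (A + B) = 2 * A * (rp - 1) * (1 - rm) := by
    have h : (S - 2 * (A + B)) * rp = (2 * A * (rp - 1) * (1 - rm)) * rp := by
      linear_combination Sp + (2 * rp - 2) * hABprod
    exact mul_right_cancel₀ (ne_of_gt hrp0) h
  refine ⟨?_, ?_, ?_⟩
  · intro h
    have h1 : (rp - 1) * (1 - rm) < 0 := by nlinarith [hkey]
    constructor
    · nlinarith
    · nlinarith
  · intro h
    have h1 : (rp - 1) * (1 - rm) = 0 := by
      have : 2 * A * ((rp - 1) * (1 - rm)) = 0 := by linarith [hkey, h]; 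
      have h2 : (2 * A : ℝ) ≠ 0 := by positivity
      exact (mul_eq_zero.mp this).resolve_left h2
    rcases mul_eq_zero.mp h1 with h2 | h2
    · left
      have hrp1 : rp = 1 := by linarith
      exact ⟨hrp1, by nlinarith⟩
    · right
      have hrm1 : rm = 1 := by linarith
      exact ⟨hrm1, by nlinarith⟩
  · intro h
    have h1 : 0 < (rp - 1) * (1 - rm) := by nlinarith [hkey]
    rcases mul_pos_iff.mp h1 with ⟨h2, h3⟩ | ⟨h2, h3⟩
    · left; exact ⟨by linarith, by linarith⟩
    · right; exact ⟨by linarith, by linarith⟩
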